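/- arXiv:1612.02298 — 3 statements merged into one kernel-verified Lean document; each statement's English description precedes it below -/
import Mathlib

section
/- For the discrete Laplace distribution DL(α) with 0 < α < 1 (Pr(N=i) = ((1−α)/(1+α))·α^{|i|} for i ∈ ℤ) and any integers z, z', the probability ratio satisfies α^{|z−z'|} ≤ Pr(z+N=s)/Pr(z'+N=s) ≤ α^{−|z−z'|} for all s ∈ ℤ. -/
/-- Probability mass function of the discrete Laplace distribution DL(α) on ℤ. -/
noncomputable def discreteLaplacePMF (α : ℝ) (i : ℤ) : ℝ :=
  ((1 - α) / (1 + α)) * α ^ i.natAbs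

/-- Probability-ratio bound for shifted discrete Laplace noise: for `0 < α < 1` and
integers `z z' s`, `α^{|z−z'|} ≤ Pr(z+N=s)/Pr(z'+N=s) ≤ α^{−|z−z'|}`. -/
theorem discrete_laplace_ratio (α : ℝ) (hα0 : 0 < α) (hα1 : α < 1) (z z' s : ℤ) :
    α ^ |z - z'| ≤ discreteLaplacePMF α (s - z) / discreteLaplacePMF α (s - z') ∧
    discreteLaplacePMF α (s - z) / discreteLaplacePMF α (s - z') ≤ α ^ (-|z - z'|) := by
  have hαne : α ≠ 0 := ne_of_gt hα0
  have hc : (1 - α) / (1 + α) ≠ 0 := by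
    apply div_ne_zero <;> nlinarith
  have hratio : discreteLaplacePMF α (s - z) / discreteLaplacePMF α (s - z')
      = α ^ (((s - z).natAbs : ℤ) - ((s - z').natAbs : ℤ)) := by
    unfold discreteLaplacePMF
    rw [mul_div_mul_left _ _ hc, zpow_sub₀ hαne, zpow_natCast, zpow_natCast]
  have habs : |((s - z).natAbs : ℤ) - ((s - z').natAbs : ℤ)| ≤ |z - z'| := by
    rw [← Int.abs_eq_natAbs, ← Int.abs_eq_natAbs]
    have := abs_abs_sub_abs_le_abs_sub (s - z) (s - z')
    have h2 : (s - z) - (s - z') = z' - z := by ring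
    rwa [h2, abs_sub_comm z' z] at this

  rw [hratio]
  constructor
  · exact zpow_le_zpow_right_of_le_one₀ hα0 hα1.le ((abs_le.mp habs).2)
  · exact zpow_le_zpow_right_of_le_one₀ hα0 hα1.le (by linarith [(abs_le.mp habs).1])
end

section
/- Discrete Laplace mechanism for iDP: let f be an integer-valued query with local sensitivity LS_f(D) = max over neighbors D' of |f(D')−f(D)| > 0. The mechanism κ(x) = f(x) + N with N ~ DL(exp(−ε/LS_f(D))) satisfies ε-individual differential privacy at D. -/
lemma dlp_exp (x : ℝ) (i : ℤ) :
    discreteLaplacePMF (Real.exp x) i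
      = ((1 - Real.exp x) / (1 + Real.exp x)) * Real.exp ((i.natAbs : ℝ) * x) := by
  rw [discreteLaplacePMF, Real.exp_nat_mul]

/-- Discrete Laplace mechanism for iDP: if `Δ > 0` is the local sensitivity of the
integer-valued query `f` at `D`, then the mechanism `κ(x) = f(x) + N` with
`N ~ DL(exp(−ε/Δ))` (so `Pr(κ(x)=s) = p(s − f x)`) satisfies ε-iDP at `D`:
for every neighbor `D'` and every outcome `s`,
`exp(−ε)·Pr(κ(D')=s) ≤ Pr(κ(D)=s) ≤ exp(ε)·Pr(κ(D')=s)`. -/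
theorem discrete_laplace_mechanism_idp {α : Type*} [DecidableEq α] {n : ℕ}
    (f : (Fin n → α) → ℤ) (ε Δ : ℝ) (hε : 0 < ε) (hΔ : 0 < Δ) (D : Fin n → α)
    (hLS : IsGreatest {r : ℝ | ∃ D' : Fin n → α, hammingDist D D' = 1 ∧
      r = |(f D' : ℝ) - (f D : ℝ)|} Δ) :
    ∀ D' : Fin n → α, hammingDist D D' = 1 → ∀ s : ℤ,
      Real.exp (-ε) * discreteLaplacePMF (Real.exp (-ε / Δ)) (s - f D')
          ≤ discreteLaplacePMF (Real.exp (-ε / Δ)) (s - f D) ∧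
      discreteLaplacePMF (Real.exp (-ε / Δ)) (s - f D)
          ≤ Real.exp ε * discreteLaplacePMF (Real.exp (-ε / Δ)) (s - f D') := by
  intro D' hD' s
  have hbound : |(f D' : ℝ) - (f D : ℝ)| ≤ Δ := hLS.2 ⟨D', hD', rfl⟩
  set a : ℝ := (((s - f D).natAbs : ℕ) : ℝ) with ha
  set b : ℝ := (((s - f D').natAbs : ℕ) : ℝ) with hb
  have ha' : a = |(s : ℝ) - (f D : ℝ)| := by
    rw [ha, Nat.cast_natAbs]; push_cast; ring_nf
  have hb' : b = |(s : ℝ) - (f D' : ℝ)| := by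
    rw [hb, Nat.cast_natAbs]; push_cast; ring_nf
  have hab : a ≤ b + Δ := by
    rw [ha', hb']
    calc |(s : ℝ) - (f D : ℝ)| ≤ |(s : ℝ) - (f D' : ℝ)| + |(f D' : ℝ) - (f D : ℝ)| := by
          simpa using abs_sub_le ((s : ℝ)) ((f D' : ℝ)) ((f D : ℝ))
      _ ≤ |(s : ℝ) - (f D' : ℝ)| + Δ := by linarith
  have hba : b ≤ a + Δ := by
    rw [ha', hb']
    calc |(s : ℝ) - (f D' : ℝ)| ≤ |(s : ℝ) - (f D : ℝ)| + |(f D : ℝ) - (f D' : ℝ)| := by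
          simpa using abs_sub_le ((s : ℝ)) ((f D : ℝ)) ((f D' : ℝ))
      _ ≤ |(s : ℝ) - (f D : ℝ)| + Δ := by
          rw [abs_sub_comm] at hbound; linarith
  have hC : 0 ≤ (1 - Real.exp (-ε / Δ)) / (1 + Real.exp (-ε / Δ)) := by
    apply div_nonneg
    · have : Real.exp (-ε / Δ) ≤ 1 := by
        rw [Real.exp_le_one_iff]
        exact div_nonpos_of_nonpos_of_nonneg (by linarith) hΔ.le
      linarith
    · positivity
  have key : Δ * (-ε / Δ) = -ε := by field_simp
  rw [dlp_exp, dlp_exp]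
  constructor
  · rw [mul_comm (Real.exp (-ε)), mul_assoc, ← Real.exp_add]
    apply mul_le_mul_of_nonneg_left _ hC
    rw [Real.exp_le_exp]
    have := mul_le_mul_of_nonneg_right hab (le_of_lt (div_pos hε hΔ))
    nlinarith [key]
  · rw [mul_comm (Real.exp ε), mul_assoc, ← Real.exp_add]
    apply mul_le_mul_of_nonneg_left _ hC
    rw [Real.exp_le_exp]
    have := mul_le_mul_of_nonneg_right hba (le_of_lt (div_pos hε hΔ))
    nlinarith [key]
end

section
/- For a sorted dataset x₁ ≤ ⋯ ≤ x_n with n = 2m+1 real entries, the local sensitivity of the median (under modification of one record) equals max{x_{m+1} − x_m, x_{m+2} − x_{m+1}} (i.e., max of gaps to the left and right neighbors of the median, with 1-based indexing where the median is x_{m+1}). -/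
/-- The median of a tuple of `2m+1` reals: the `(m+1)`-th smallest entry
(entry of index `m`, 0-based, of the sorted tuple). -/
noncomputable def medianOf {m : ℕ} (D : Fin (2 * m + 1) → ℝ) : ℝ :=
  D (Tuple.sort D ⟨m, by omega⟩)

lemma exists_le_median {m : ℕ} (f : Fin (2 * m + 1) → ℝ) :
    ∃ S : Finset (Fin (2 * m + 1)), S.card = m + 1 ∧ ∀ i ∈ S, f i ≤ medianOf f := by
  refine ⟨Finset.image (Tuple.sort f) (Finset.Iic ⟨m, by omega⟩), ?_, ?_⟩
  · rw [Finset.card_image_of_injective _ (Tuple.sort f).injective, Fin.card_Iic]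
  · rintro i hi
    simp only [Finset.mem_image, Finset.mem_Iic] at hi
    obtain ⟨k, hk, rfl⟩ := hi
    exact Tuple.monotone_sort f hk

lemma exists_median_le {m : ℕ} (f : Fin (2 * m + 1) → ℝ) :
    ∃ S : Finset (Fin (2 * m + 1)), S.card = m + 1 ∧ ∀ i ∈ S, medianOf f ≤ f i := by
  refine ⟨Finset.image (Tuple.sort f) (Finset.Ici ⟨m, by omega⟩), ?_, ?_⟩
  · rw [Finset.card_image_of_injective _ (Tuple.sort f).injective, Fin.card_Ici]
    show 2 * m + 1 - m = m + 1
    omega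
  · rintro i hi
    simp only [Finset.mem_image, Finset.mem_Ici] at hi
    obtain ⟨k, hk, rfl⟩ := hi
    exact Tuple.monotone_sort f hk

lemma medianOf_eq_of_monotone {m : ℕ} (f : Fin (2 * m + 1) → ℝ) (h : Monotone f) :
    medianOf f = f ⟨m, by omega⟩ := by
  have h3 : f ∘ ⇑(Equiv.refl (Fin (2 * m + 1))) = f ∘ ⇑(Tuple.sort f) :=
    (Tuple.comp_sort_eq_comp_iff_monotone (f := f) (σ := Equiv.refl _)).mpr (by simpa using h)
  exact (congrFun h3 ⟨m, by omega⟩).symm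

lemma hammingDist_update_one {m : ℕ} (D : Fin (2 * m + 1) → ℝ) (j : Fin (2 * m + 1)) (b : ℝ)
    (h : D j ≠ b) : hammingDist D (Function.update D j b) = 1 := by
  rw [hammingDist, Finset.card_eq_one]
  refine ⟨j, ?_⟩
  ext i
  simp only [Finset.mem_filter, Finset.mem_univ, true_and, Finset.mem_singleton]
  constructor
  · intro hne
    by_contra hij
    exact hne (Function.update_of_ne hij _ _).symm
  · rintro rfl
    rw [Function.update_self]
    exact h

/-- The median of any dataset differing from sorted `D` in one spot is at most `D ⟨m+1⟩`. -/
lemma median_le_of_agree {m : ℕ} (hm : 1 ≤ m) (D : Fin (2 * m + 1) → ℝ)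
    (hsorted : Monotone D) (D' : Fin (2 * m + 1) → ℝ) (j : Fin (2 * m + 1))
    (hagree : ∀ i, i ≠ j → D' i = D i) :
    medianOf D' ≤ D ⟨m + 1, by have := D; omega⟩ := by
  by_contra hlt
  push_neg at hlt
  obtain ⟨T, hTcard, hT⟩ := exists_median_le D'
  have hsub : T \ {j} ⊆ Finset.Ioi (⟨m + 1, by omega⟩ : Fin (2 * m + 1)) := by
    intro i hi
    simp only [Finset.mem_sdiff, Finset.mem_singleton] at hi
    have hDi : D ⟨m + 1, by omega⟩ < D i := by
      calc D ⟨m + 1, by omega⟩ < medianOf D' := hlt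
      _ ≤ D' i := hT i hi.1
      _ = D i := hagree i hi.2
    rw [Finset.mem_Ioi]
    by_contra hle
    exact absurd (hsorted (not_lt.mp hle)) (not_le.mpr hDi)
  have hcard := Finset.card_le_card hsub
  rw [Fin.card_Ioi] at hcard
  simp only [Fin.val_mk] at hcard
  have h2 := Finset.card_le_card_sdiff_add_card (s := T) (t := {j})
  simp only [hTcard, Finset.card_singleton] at h2
  omega

/-- The median of any dataset differing from sorted `D` in one spot is at least `D ⟨m-1⟩`. -/
lemma le_median_of_agree {m : ℕ} (hm : 1 ≤ m) (D : Fin (2 * m + 1) → ℝ)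
    (hsorted : Monotone D) (D' : Fin (2 * m + 1) → ℝ) (j : Fin (2 * m + 1))
    (hagree : ∀ i, i ≠ j → D' i = D i) :
    D ⟨m - 1, by have := D; omega⟩ ≤ medianOf D' := by
  by_contra hlt
  push_neg at hlt
  obtain ⟨T, hTcard, hT⟩ := exists_le_median D'
  have hsub : T \ {j} ⊆ Finset.Iio (⟨m - 1, by omega⟩ : Fin (2 * m + 1)) := by
    intro i hi
    simp only [Finset.mem_sdiff, Finset.mem_singleton] at hi
    have hDi : D i < D ⟨m - 1, by omega⟩ := by
      calc D i = D' i := (hagree i hi.2).symm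
      _ ≤ medianOf D' := hT i hi.1
      _ < D ⟨m - 1, by omega⟩ := hlt
    rw [Finset.mem_Iio]
    by_contra hle
    exact absurd (hsorted (not_lt.mp hle)) (not_le.mpr hDi)
  have hcard := Finset.card_le_card hsub
  rw [Fin.card_Iio] at hcard
  simp only [Fin.val_mk] at hcard
  have h2 := Finset.card_le_card_sdiff_add_card (s := T) (t := {j})
  simp only [hTcard, Finset.card_singleton] at h2
  omega

lemma medianOf_update_big {m : ℕ} (hm : 1 ≤ m) (D : Fin (2 * m + 1) → ℝ)
    (hsorted : Monotone D) (b : ℝ) (hb : D ⟨m + 1, by have := D; omega⟩ < b) :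
    medianOf (Function.update D ⟨0, by omega⟩ b) = D ⟨m + 1, by have := D; omega⟩ := by
  set j0 : Fin (2 * m + 1) := ⟨0, by omega⟩ with hj0def
  set D' : Fin (2 * m + 1) → ℝ := Function.update D j0 b with hD'
  have hD'j0 : D' j0 = b := Function.update_self _ _ _
  have hD'ne : ∀ i, i ≠ j0 → D' i = D i := fun i hi => Function.update_of_ne hi _ _
  have hle : medianOf D' ≤ D ⟨m + 1, by omega⟩ :=
    median_le_of_agree hm D hsorted D' j0 hD'ne
  have hge : D ⟨m + 1, by omega⟩ ≤ medianOf D' := by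
    by_contra hlt
    push_neg at hlt
    obtain ⟨T, hTcard, hT⟩ := exists_le_median D'
    have hj0T : j0 ∉ T := by
      intro hmem
      have := hT j0 hmem
      rw [hD'j0] at this
      linarith
    have hsub : T ⊆ Finset.Iio (⟨m + 1, by omega⟩ : Fin (2 * m + 1)) \ {j0} := by
      intro i hi
      have hine : i ≠ j0 := fun h => hj0T (h ▸ hi)
      have hDi : D i < D ⟨m + 1, by omega⟩ := by
        calc D i = D' i := (hD'ne i hine).symm
        _ ≤ medianOf D' := hT i hi
        _ < D ⟨m + 1, by omega⟩ := hlt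
      simp only [Finset.mem_sdiff, Finset.mem_singleton]
      refine ⟨?_, hine⟩
      rw [Finset.mem_Iio]
      by_contra hle'
      exact absurd (hsorted (not_lt.mp hle')) (not_le.mpr hDi)
    have hcard := Finset.card_le_card hsub
    have hj0lt' : j0 ∈ Finset.Iio (⟨m + 1, by omega⟩ : Fin (2 * m + 1)) := by
      simp [Finset.mem_Iio, Fin.lt_def, hj0def]
    rw [Finset.card_sdiff_of_subset (by simpa using hj0lt'), Fin.card_Iio] at hcard
    simp only [Fin.val_mk, hTcard, Finset.card_singleton] at hcard
    omega
  linarith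

lemma medianOf_update_small {m : ℕ} (hm : 1 ≤ m) (D : Fin (2 * m + 1) → ℝ)
    (hsorted : Monotone D) (b : ℝ) (hb : b < D ⟨m - 1, by have := D; omega⟩) :
    medianOf (Function.update D ⟨2 * m, by omega⟩ b) = D ⟨m - 1, by have := D; omega⟩ := by
  set j0 : Fin (2 * m + 1) := ⟨2 * m, by omega⟩ with hj0def
  set D' : Fin (2 * m + 1) → ℝ := Function.update D j0 b with hD'
  have hD'j0 : D' j0 = b := Function.update_self _ _ _
  have hD'ne : ∀ i, i ≠ j0 → D' i = D i := fun i hi => Function.update_of_ne hi _ _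
  have hge : D ⟨m - 1, by omega⟩ ≤ medianOf D' :=
    le_median_of_agree hm D hsorted D' j0 hD'ne
  have hle : medianOf D' ≤ D ⟨m - 1, by omega⟩ := by
    by_contra hlt
    push_neg at hlt
    obtain ⟨T, hTcard, hT⟩ := exists_median_le D'
    have hj0T : j0 ∉ T := by
      intro hmem
      have := hT j0 hmem
      rw [hD'j0] at this
      linarith
    have hsub : T ⊆ Finset.Ioi (⟨m - 1, by omega⟩ : Fin (2 * m + 1)) \ {j0} := by
      intro i hi
      have hine : i ≠ j0 := fun h => hj0T (h ▸ hi)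
      have hDi : D ⟨m - 1, by omega⟩ < D i := by
        calc D ⟨m - 1, by omega⟩ < medianOf D' := hlt
        _ ≤ D' i := hT i hi
        _ = D i := hD'ne i hine
      simp only [Finset.mem_sdiff, Finset.mem_singleton]
      refine ⟨?_, hine⟩
      rw [Finset.mem_Ioi]
      by_contra hle'
      exact absurd (hsorted (not_lt.mp hle')) (not_le.mpr hDi)
    have hcard := Finset.card_le_card hsub
    have hj0lt' : j0 ∈ Finset.Ioi (⟨m - 1, by omega⟩ : Fin (2 * m + 1)) := by
      simp only [Finset.mem_Ioi, Fin.lt_def, hj0def, Fin.val_mk]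
      omega
    rw [Finset.card_sdiff_of_subset (by simpa using hj0lt'), Fin.card_Ioi] at hcard
    simp only [Fin.val_mk, hTcard, Finset.card_singleton] at hcard
    omega
  linarith

/-- For a sorted tuple `x₁ ≤ ⋯ ≤ x_{2m+1}` of reals, the local sensitivity of the
median under modification of one record equals
`max {x_{m+1} − x_m, x_{m+2} − x_{m+1}}` (1-based indexing, median `x_{m+1}`). -/
theorem median_local_sensitivity (m : ℕ) (hm : 1 ≤ m) (D : Fin (2 * m + 1) → ℝ)
    (hsorted : Monotone D) :
    sSup {r : ℝ | ∃ D' : Fin (2 * m + 1) → ℝ, hammingDist D D' = 1 ∧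
        r = |medianOf D' - medianOf D|}
      = max (D ⟨m, by omega⟩ - D ⟨m - 1, by omega⟩)
            (D ⟨m + 1, by omega⟩ - D ⟨m, by omega⟩) := by
  have hmedD : medianOf D = D ⟨m, by omega⟩ := medianOf_eq_of_monotone D hsorted
  have hml : D ⟨m - 1, by omega⟩ ≤ D ⟨m, by omega⟩ := hsorted (Fin.mk_le_mk.mpr (by omega))
  have hmr : D ⟨m, by omega⟩ ≤ D ⟨m + 1, by omega⟩ := hsorted (Fin.mk_le_mk.mpr (by omega))
  have hub : ∀ r ∈ {r : ℝ | ∃ D' : Fin (2 * m + 1) → ℝ, hammingDist D D' = 1 ∧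
        r = |medianOf D' - medianOf D|},
      r ≤ max (D ⟨m, by omega⟩ - D ⟨m - 1, by omega⟩)
            (D ⟨m + 1, by omega⟩ - D ⟨m, by omega⟩) := by
    rintro r ⟨D', hdist, rfl⟩
    rw [hammingDist, Finset.card_eq_one] at hdist
    obtain ⟨j, hj⟩ := hdist
    have hagree : ∀ i : Fin (2 * m + 1), i ≠ j → D' i = D i := by
      intro i hij
      by_contra hne
      have hmem : i ∈ ({j} : Finset _) := hj ▸ (by simp; exact fun h => hne h.symm)
      exact hij (Finset.mem_singleton.mp hmem)
    have hup := median_le_of_agree hm D hsorted D' j hagree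
    have hdown := le_median_of_agree hm D hsorted D' j hagree
    rw [abs_sub_le_iff]
    exact ⟨le_trans (by linarith) (le_max_right _ _), le_trans (by linarith) (le_max_left _ _)⟩
  have hR : (D ⟨m + 1, by omega⟩ - D ⟨m, by omega⟩) ∈ {r : ℝ | ∃ D' : Fin (2 * m + 1) → ℝ,
      hammingDist D D' = 1 ∧ r = |medianOf D' - medianOf D|} := by
    refine ⟨Function.update D ⟨0, by omega⟩ (D ⟨m + 1, by omega⟩ + 1), ?_, ?_⟩
    · refine hammingDist_update_one D _ _ (ne_of_lt ?_)
      have : D ⟨0, by omega⟩ ≤ D ⟨m + 1, by omega⟩ := hsorted (Fin.mk_le_mk.mpr (by omega))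
      linarith
    · have hmed := medianOf_update_big hm D hsorted (D ⟨m + 1, by omega⟩ + 1) (by linarith)
      rw [abs_of_nonneg (by linarith)]
      linarith
  have hL : (D ⟨m, by omega⟩ - D ⟨m - 1, by omega⟩) ∈ {r : ℝ | ∃ D' : Fin (2 * m + 1) → ℝ,
      hammingDist D D' = 1 ∧ r = |medianOf D' - medianOf D|} := by
    refine ⟨Function.update D ⟨2 * m, by omega⟩ (D ⟨m - 1, by omega⟩ - 1), ?_, ?_⟩
    · refine hammingDist_update_one D _ _ (ne_of_gt ?_)
      have : D ⟨m - 1, by omega⟩ ≤ D ⟨2 * m, by omega⟩ := hsorted (Fin.mk_le_mk.mpr (by omega))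
      linarith
    · have hmed := medianOf_update_small hm D hsorted (D ⟨m - 1, by omega⟩ - 1) (by linarith)
      rw [abs_of_nonpos (by linarith)]
      linarith
  have hbdd : BddAbove {r : ℝ | ∃ D' : Fin (2 * m + 1) → ℝ, hammingDist D D' = 1 ∧
      r = |medianOf D' - medianOf D|} := ⟨_, hub⟩
  refine le_antisymm (csSup_le ⟨_, hR⟩ hub) ?_
  exact max_le (le_csSup hbdd hL) (le_csSup hbdd hR)
end
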